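/- The map P defined on entire functions by P(g)(z) = g(z)·g'(z) is not hypercyclic on H(ℂ): there is no entire function g such that for every entire function f and every ε > 0, R > 0 there exists n ∈ ℕ with sup_{|z| ≤ R} |P^n(g)(z) − f(z)| < ε. -/

import Mathlib

noncomputable def P (g : ℂ → ℂ) : ℂ → ℂ := fun z => g z * deriv g z

open Set Metric

lemma diff_deriv {g : ℂ → ℂ} (hg : Differentiable ℂ g) : Differentiable ℂ (deriv g) := by
  have h := (Complex.analyticOnNhd_univ_iff_differentiable.2 hg).deriv
  exact fun z => (h z trivial).differentiableAt

lemma diff_Pn {g : ℂ → ℂ} (hg : Differentiable ℂ g) (n : ℕ) : Differentiable ℂ (P^[n] g) := by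
  induction n with
  | zero => exact hg
  | succ n ih =>
    rw [Function.iterate_succ_apply']
    exact ih.mul (diff_deriv ih)

lemma zero_persist {g : ℂ → ℂ} {a : ℂ} (h : g a = 0) (k : ℕ) : P^[k] g a = 0 := by
  induction k with
  | zero => exact h
  | succ k ih => rw [Function.iterate_succ_apply']; simp [P, ih]

lemma exists_zero {h : ℂ → ℂ} (hd : Differentiable ℂ h)
    (h0 : ‖h 0‖ < 1/8)
    (hb : ∀ z : ℂ, ‖z‖ = 1 → 7/8 ≤ ‖h z‖) :
    ∃ a : ℂ, ‖a‖ ≤ 1 ∧ h a = 0 := by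
  by_contra hc
  push_neg at hc
  have hne : ∀ z ∈ closedBall (0:ℂ) 1, h z ≠ 0 := by
    intro z hz
    exact hc z (by simpa using mem_closedBall_zero_iff.1 hz)
  have hdc : DiffContOnCl ℂ (fun z => (h z)⁻¹) (ball (0:ℂ) 1) := by
    constructor
    · intro z hz
      exact ((hd z).inv (hne z (ball_subset_closedBall hz))).differentiableWithinAt
    · rw [closure_ball (0:ℂ) one_ne_zero]
      exact (hd.continuous.continuousOn).inv₀ hne
  have hC : ∀ z ∈ frontier (ball (0:ℂ) 1), ‖(h z)⁻¹‖ ≤ (7/8 : ℝ)⁻¹ := by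
    intro z hz
    rw [frontier_ball (0:ℂ) one_ne_zero, mem_sphere_zero_iff_norm] at hz
    have := hb z (by simpa using hz)
    rw [norm_inv]
    exact inv_anti₀ (by norm_num) this
  have h0m : (0:ℂ) ∈ closure (ball (0:ℂ) 1) := by
    rw [closure_ball (0:ℂ) one_ne_zero]
    simp
  have := Complex.norm_le_of_forall_mem_frontier_norm_le isBounded_ball hdc hC h0m
  rw [norm_inv] at this
  have hpos : 0 < ‖h 0‖ := by
    simpa [norm_pos_iff] using hne 0 (by simp)
  have : (7/8 : ℝ) ≤ ‖h 0‖ := by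
    rwa [inv_le_inv₀ (norm_pos_iff.2 (hne 0 (by simp))) (by norm_num)] at this
  linarith

/-- `P(g) = g·g'` is not hypercyclic on the space of entire functions. -/
theorem P_not_hypercyclic :
    ¬ ∃ g : ℂ → ℂ, Differentiable ℂ g ∧
      ∀ f : ℂ → ℂ, Differentiable ℂ f → ∀ ε > (0 : ℝ), ∀ R > (0 : ℝ),
        ∃ n : ℕ, ∀ z : ℂ, ‖z‖ ≤ R →
          ‖(P^[n] g) z - f z‖ < ε := by
  rintro ⟨g, hg, hyp⟩
  obtain ⟨n, hn⟩ := hyp id differentiable_id (1/8) (by norm_num) 1 one_pos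
  set h := P^[n] g with hh
  have h0 : ‖h 0‖ < 1/8 := by simpa using hn 0 (by simp)
  have hb : ∀ z : ℂ, ‖z‖ = 1 → 7/8 ≤ ‖h z‖ := by
    intro z hz
    have h1 := hn z (le_of_eq hz)
    have h2 : ‖z‖ - ‖h z - z‖ ≤ ‖h z‖ := by
      have h4 : ‖z‖ - ‖h z‖ ≤ ‖z - h z‖ := norm_sub_norm_le _ _
      rw [norm_sub_rev] at h4
      linarith
    simp only [id] at h1
    linarith [hz ▸ h2]
  obtain ⟨a, ha1, ha0⟩ := exists_zero (diff_Pn hg n) h0 hb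
  -- zero persists for all m ≥ n
  have hpersist : ∀ m, n ≤ m → P^[m] g a = 0 := by
    intro m hm
    obtain ⟨k, rfl⟩ := Nat.exists_eq_add_of_le hm
    rw [Nat.add_comm, Function.iterate_add_apply]
    exact zero_persist ha0 k
  -- approximate constants 1, ..., n+1
  have key : ∀ k : Fin (n+1), ∃ m : ℕ, ∀ z : ℂ, ‖z‖ ≤ 1 →
      ‖P^[m] g z - (((k:ℕ):ℂ) + 1)‖ < 1/3 :=
    fun k => hyp (fun _ => ((k:ℕ):ℂ) + 1) (differentiable_const _) (1/3) (by norm_num) 1 one_pos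
  choose m hm using key
  have hinj : Function.Injective m := by
    intro k j hkj
    by_contra hne
    have h1 := hm k a ha1
    have h2 := hm j a ha1
    rw [hkj] at h1
    have : ‖(((k:ℕ):ℂ) + 1) - (((j:ℕ):ℂ) + 1)‖ < 2/3 := by
      calc ‖(((k:ℕ):ℂ) + 1) - (((j:ℕ):ℂ) + 1)‖
          = ‖(P^[m j] g a - (((j:ℕ):ℂ) + 1)) - (P^[m j] g a - (((k:ℕ):ℂ) + 1))‖ := by
            ring_nf
        _ ≤ ‖P^[m j] g a - (((j:ℕ):ℂ) + 1)‖ + ‖P^[m j] g a - (((k:ℕ):ℂ) + 1)‖ :=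
            norm_sub_le _ _
        _ < 2/3 := by linarith
    have heq : ((((k:ℕ):ℂ) + 1) - (((j:ℕ):ℂ) + 1)) = ((((k:ℕ):ℝ) - ((j:ℕ):ℝ) : ℝ) : ℂ) := by
      push_cast; ring
    rw [heq, Complex.norm_real, Real.norm_eq_abs] at this
    have hknej : ((k:ℕ):ℤ) ≠ ((j:ℕ):ℤ) := by
      intro hc
      exact hne (Fin.ext (by exact_mod_cast hc))
    have hInt : (1:ℤ) ≤ |((k:ℕ):ℤ) - ((j:ℕ):ℤ)| := Int.one_le_abs (sub_ne_zero.2 hknej)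
    have : (1:ℝ) ≤ |((k:ℕ):ℝ) - ((j:ℕ):ℝ)| := by exact_mod_cast hInt
    linarith
  -- pigeonhole: some m k ≥ n
  have : ∃ k : Fin (n+1), n ≤ m k := by
    by_contra hc
    push_neg at hc
    have : Function.Injective (fun k : Fin (n+1) => (⟨m k, hc k⟩ : Fin n)) := by
      intro k j hkj
      exact hinj (by simpa using congrArg Fin.val hkj)
    have := Fintype.card_le_of_injective _ this
    simp at this
  obtain ⟨k, hk⟩ := this
  have hz := hpersist (m k) hk
  have := hm k a ha1
  rw [hz] at this
  simp only [zero_sub, norm_neg] at this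
  have : ‖((k:ℕ):ℂ) + 1‖ < 1/3 := this
  have h1 : (1:ℝ) ≤ ‖((k:ℕ):ℂ) + 1‖ := by
    have : ((((k:ℕ):ℂ)) + 1) = ((((k:ℕ):ℝ) + 1 : ℝ) : ℂ) := by push_cast; ring
    rw [this, Complex.norm_real, Real.norm_eq_abs]
    have : (0:ℝ) ≤ ((k:ℕ):ℝ) := Nat.cast_nonneg _
    rw [abs_of_nonneg (by linarith)]
    linarith
  linarith
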